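/- Let G be a simple graph on a finite vertex type V with |V| ≥ 2k and k ≥ 1, and suppose no k-element subset of V is a dominating set of G. Then the diameter of the reduction graph G' equals 3 if G has a dominating set of size at most 2k, and equals 2 otherwise. -/

import Mathlib

/-- `S` dominates `v` in `G` if `v ∈ S` or some element of `S` is adjacent to `v`. -/
def SimpleGraph.DominatesVert {V : Type*} (G : SimpleGraph V) (S : Finset V) (v : V) : Prop :=
  v ∈ S ∨ ∃ u ∈ S, G.Adj u v

/-- `S` is a dominating set of `G` if it dominates every vertex. -/
def SimpleGraph.IsDominatingSet {V : Type*} (G : SimpleGraph V) (S : Finset V) : Prop :=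
  ∀ v : V, G.DominatesVert S v

/-- The dominating-set-to-diameter reduction graph `G'`: its vertices are the `k`-element
subsets of `V` together with the elements of `V`; the elements of `V` form a clique; a
`k`-subset `S` is adjacent to a vertex `v ∈ V` iff `S` does not dominate `v`; two `k`-subsets
are never adjacent. -/
def SimpleGraph.reductionGraph {V : Type*} (G : SimpleGraph V) (k : ℕ) :
    SimpleGraph ({A : Finset V // A.card = k} ⊕ V) where
  Adj x y :=
    match x, y with
    | Sum.inl _, Sum.inl _ => False
    | Sum.inl S, Sum.inr v => ¬ G.DominatesVert S.1 v
    | Sum.inr v, Sum.inl S => ¬ G.DominatesVert S.1 v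
    | Sum.inr u, Sum.inr v => u ≠ v
  symm := by
    constructor
    rintro (S | u) (T | v) hadj
    · exact hadj
    · exact hadj
    · exact hadj
    · exact hadj.symm
  loopless := by
    constructor
    rintro (S | u) hadj
    · exact hadj
    · exact hadj rfl

section Aux

variable {V : Type*} [Fintype V] [DecidableEq V] (G : SimpleGraph V) {k : ℕ}

lemma dom_mono {S T : Finset V} {v : V} (hST : S ⊆ T) (h : G.DominatesVert S v) :
    G.DominatesVert T v := by
  rcases h with h | ⟨u, hu, hadj⟩
  · exact Or.inl (hST h)
  · exact Or.inr ⟨u, hST hu, hadj⟩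

lemma adj_inl_inr {S : {A : Finset V // A.card = k}} {v : V} :
    (G.reductionGraph k).Adj (Sum.inl S) (Sum.inr v) ↔ ¬ G.DominatesVert S.1 v := Iff.rfl

variable {G}

lemma exists_nondom (hno : ∀ A : Finset V, A.card = k → ¬ G.IsDominatingSet A)
    (S : {A : Finset V // A.card = k}) : ∃ w, ¬ G.DominatesVert S.1 w := by
  by_contra h
  push_neg at h
  exact hno S.1 S.2 h

lemma edist_inl_inr_le (hno : ∀ A : Finset V, A.card = k → ¬ G.IsDominatingSet A)
    (S : {A : Finset V // A.card = k}) (v : V) :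
    (G.reductionGraph k).edist (Sum.inl S) (Sum.inr v) ≤ 2 := by
  by_cases hd : G.DominatesVert S.1 v
  · obtain ⟨w, hw⟩ := exists_nondom hno S
    have hwv : w ≠ v := fun h => hw (h ▸ hd)
    refine le_trans (SimpleGraph.edist_le
      (SimpleGraph.Walk.cons (u := Sum.inl S) (v := Sum.inr w) (show (G.reductionGraph k).Adj (Sum.inl S) (Sum.inr w) from hw)
        (SimpleGraph.Walk.cons (show (G.reductionGraph k).Adj (Sum.inr w) (Sum.inr v) from hwv)
          SimpleGraph.Walk.nil))) ?_
    simp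
  · calc (G.reductionGraph k).edist (Sum.inl S) (Sum.inr v) ≤ 1 :=
        le_of_eq (SimpleGraph.edist_eq_one_iff_adj.mpr hd)
      _ ≤ 2 := by norm_num

lemma edist_inr_inr_le (u v : V) :
    (G.reductionGraph k).edist (Sum.inr u : _ ⊕ V) (Sum.inr v) ≤ 1 := by
  by_cases h : u = v
  · subst h; simp [SimpleGraph.edist_self]
  · exact le_of_eq (SimpleGraph.edist_eq_one_iff_adj.mpr h)

end Aux


/-- Main combinatorial claim of the reduction (Theorem 2.3): if `|V| ≥ 2k`, `k ≥ 1`, and no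
`k`-element subset of `V` is a dominating set of `G`, then the diameter of the reduction graph
`G'` equals `3` if `G` has a dominating set of size at most `2k`, and equals `2` otherwise. -/
theorem reduction_diam_two_or_three {V : Type*} [Fintype V] [DecidableEq V]
    (G : SimpleGraph V) (k : ℕ) (hk : 1 ≤ k) (hV : 2 * k ≤ Fintype.card V)
    (hno : ∀ A : Finset V, A.card = k → ¬ G.IsDominatingSet A) :
    ((∃ A : Finset V, A.card ≤ 2 * k ∧ G.IsDominatingSet A) →
        (G.reductionGraph k).diam = 3) ∧
      ((¬ ∃ A : Finset V, A.card ≤ 2 * k ∧ G.IsDominatingSet A) →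
        (G.reductionGraph k).diam = 2) := by
  set G' := G.reductionGraph k with hG'
  -- edist between two k-sets is at most 3
  have hSTle : ∀ S T : {A : Finset V // A.card = k},
      G'.edist (Sum.inl S) (Sum.inl T) ≤ 3 := by
    intro S T
    obtain ⟨w, hw⟩ := exists_nondom hno S
    have h1 : G'.edist (Sum.inl S) (Sum.inr w) ≤ 1 :=
      le_of_eq (SimpleGraph.edist_eq_one_iff_adj.mpr hw)
    have h2 : G'.edist (Sum.inr w) (Sum.inl T) ≤ 2 := by
      rw [SimpleGraph.edist_comm]
      exact edist_inl_inr_le hno T w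
    calc G'.edist (Sum.inl S) (Sum.inl T)
        ≤ G'.edist (Sum.inl S) (Sum.inr w) + G'.edist (Sum.inr w) (Sum.inl T) :=
          SimpleGraph.edist_triangle
      _ ≤ 1 + 2 := add_le_add h1 h2
      _ = 3 := by norm_num
  have hediam3 : G'.ediam ≤ 3 := by
    apply SimpleGraph.ediam_le_of_edist_le
    rintro (S | u) (T | v)
    · exact hSTle S T
    · exact le_trans (edist_inl_inr_le hno S v) (by norm_num)
    · rw [SimpleGraph.edist_comm]
      exact le_trans (edist_inl_inr_le hno T u) (by norm_num)
    · exact le_trans (edist_inr_inr_le u v) (by norm_num)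
  constructor
  · rintro ⟨A, hAcard, hAdom⟩
    -- extend A to a set B of size 2k, split into S and T
    obtain ⟨B, hAB, hBuniv, hBcard⟩ :=
      Finset.exists_subsuperset_card_eq (A.subset_univ) hAcard (by simpa using hV)
    obtain ⟨S, hSB, hScard⟩ := Finset.exists_subset_card_eq (show k ≤ B.card by omega)
    set T : Finset V := B \ S with hT
    have hTcard : T.card = k := by
      rw [hT, Finset.card_sdiff_of_subset hSB, hBcard, hScard]; omega
    have hBdom : G.IsDominatingSet B := fun v => dom_mono G hAB (hAdom v)
    have hST : ∀ v : V, G.DominatesVert S v ∨ G.DominatesVert T v := by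
      intro v
      rcases hBdom v with h | ⟨u, hu, hadj⟩
      · by_cases hvS : v ∈ S
        · exact Or.inl (Or.inl hvS)
        · exact Or.inr (Or.inl (Finset.mem_sdiff.mpr ⟨h, hvS⟩))
      · by_cases huS : u ∈ S
        · exact Or.inl (Or.inr ⟨u, huS, hadj⟩)
        · exact Or.inr (Or.inr ⟨u, Finset.mem_sdiff.mpr ⟨hu, huS⟩, hadj⟩)
    set Sv : {A : Finset V // A.card = k} := ⟨S, hScard⟩
    set Tv : {A : Finset V // A.card = k} := ⟨T, hTcard⟩
    have hSneT : (Sum.inl Sv : _ ⊕ V) ≠ Sum.inl Tv := by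
      intro h
      have hST' : S = T := congrArg (fun x => (Sum.elim Subtype.val (fun _ => S) x)) h
      obtain ⟨x, hx⟩ := Finset.card_pos.mp (by omega : 0 < S.card)
      have : x ∈ T := hST' ▸ hx
      exact (Finset.mem_sdiff.mp this).2 hx
    have hd := hSTle Sv Tv
    have hne0 : G'.edist (Sum.inl Sv) (Sum.inl Tv) ≠ 0 :=
      fun h => hSneT (SimpleGraph.edist_eq_zero_iff.mp h)
    have hne1 : G'.edist (Sum.inl Sv) (Sum.inl Tv) ≠ 1 := by
      intro h
      exact SimpleGraph.edist_eq_one_iff_adj.mp h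
    have key : ∀ {x y : {A : Finset V // A.card = k} ⊕ V} (p : G'.Walk x y),
        x = Sum.inl Sv → y = Sum.inl Tv → p.length ≠ 2 := by
      intro x y p
      cases p with
      | nil => intro hx hy h2; simp at h2
      | @cons _ b _ h1 q =>
        cases q with
        | nil => intro hx hy h2; simp at h2
        | cons h2 q' =>
          cases q' with
          | nil =>
            intro hx hy _
            subst hx; subst hy
            rcases b with S' | v
            · exact h2
            · rcases hST v with hv | hv
              · exact h1 hv
              · exact h2 hv
          | cons h3 q'' => intro _ _ h2; simp at h2
    have hne2 : G'.edist (Sum.inl Sv) (Sum.inl Tv) ≠ 2 := by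
      intro h
      obtain ⟨p, hp⟩ := SimpleGraph.exists_walk_of_edist_eq_coe (k := 2) h
      exact key p rfl rfl hp
    have hne_top : G'.edist (Sum.inl Sv) (Sum.inl Tv) ≠ ⊤ := by
      intro h; rw [h] at hd; exact absurd hd (by simp)
    have hd3 : G'.edist (Sum.inl Sv) (Sum.inl Tv) = 3 := by
      lift G'.edist (Sum.inl Sv) (Sum.inl Tv) to ℕ using hne_top with n hn
      have h3 : n ≤ 3 := by exact_mod_cast hd
      have h0 : n ≠ 0 := by exact_mod_cast hne0
      have h1 : n ≠ 1 := by exact_mod_cast hne1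
      have h2 : n ≠ 2 := by exact_mod_cast hne2
      have : n = 3 := by omega
      exact_mod_cast this
    have hediam : G'.ediam = 3 :=
      le_antisymm hediam3 (hd3 ▸ SimpleGraph.edist_le_ediam)
    rw [SimpleGraph.diam, hediam]
    rfl
  · intro hno2
    push_neg at hno2
    -- every pair of k-sets has a common non-dominated vertex
    have hST2 : ∀ S T : {A : Finset V // A.card = k},
        G'.edist (Sum.inl S) (Sum.inl T) ≤ 2 := by
      intro S T
      have : ∃ v, ¬ G.DominatesVert S.1 v ∧ ¬ G.DominatesVert T.1 v := by
        by_contra h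
        push_neg at h
        have hdom : G.IsDominatingSet (S.1 ∪ T.1) := by
          intro v
          by_cases hv : G.DominatesVert S.1 v
          · exact dom_mono G Finset.subset_union_left hv
          · exact dom_mono G Finset.subset_union_right (h v hv)
        have hcard : (S.1 ∪ T.1).card ≤ 2 * k := by
          calc (S.1 ∪ T.1).card ≤ S.1.card + T.1.card := Finset.card_union_le _ _
            _ = 2 * k := by rw [S.2, T.2]; ring
        exact hno2 (S.1 ∪ T.1) hcard hdom
      obtain ⟨v, hvS, hvT⟩ := this
      have h1 : G'.edist (Sum.inl S) (Sum.inr v) ≤ 1 :=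
        le_of_eq (SimpleGraph.edist_eq_one_iff_adj.mpr hvS)
      have h2 : G'.edist (Sum.inr v) (Sum.inl T) ≤ 1 :=
        le_of_eq (SimpleGraph.edist_eq_one_iff_adj.mpr hvT)
      calc G'.edist (Sum.inl S) (Sum.inl T)
          ≤ G'.edist (Sum.inl S) (Sum.inr v) + G'.edist (Sum.inr v) (Sum.inl T) :=
            SimpleGraph.edist_triangle
        _ ≤ 1 + 1 := add_le_add h1 h2
        _ = 2 := by norm_num
    have hediam2 : G'.ediam ≤ 2 := by
      apply SimpleGraph.ediam_le_of_edist_le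
      rintro (S | u) (T | v)
      · exact hST2 S T
      · exact edist_inl_inr_le hno S v
      · rw [SimpleGraph.edist_comm]
        exact edist_inl_inr_le hno T u
      · exact le_trans (edist_inr_inr_le u v) (by norm_num)
    -- lower bound: a k-set and one of its elements are at distance 2
    obtain ⟨S, _, hScard⟩ := Finset.exists_subset_card_eq
      (show k ≤ (Finset.univ : Finset V).card by rw [Finset.card_univ]; omega)
    obtain ⟨v, hv⟩ := Finset.card_pos.mp (by omega : 0 < S.card)
    set Sv : {A : Finset V // A.card = k} := ⟨S, hScard⟩
    have hne0 : G'.edist (Sum.inl Sv) (Sum.inr v) ≠ 0 := by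
      intro h
      exact absurd (SimpleGraph.edist_eq_zero_iff.mp h) (by simp)
    have hne1 : G'.edist (Sum.inl Sv) (Sum.inr v) ≠ 1 := by
      intro h
      exact (SimpleGraph.edist_eq_one_iff_adj.mp h) (Or.inl hv)
    have hle2 : G'.edist (Sum.inl Sv) (Sum.inr v) ≤ 2 := edist_inl_inr_le hno Sv v
    have hne_top : G'.edist (Sum.inl Sv) (Sum.inr v) ≠ ⊤ := by
      intro h; rw [h] at hle2; exact absurd hle2 (by simp)
    have hd2 : G'.edist (Sum.inl Sv) (Sum.inr v) = 2 := by
      lift G'.edist (Sum.inl Sv) (Sum.inr v) to ℕ using hne_top with n hn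
      have h2 : n ≤ 2 := by exact_mod_cast hle2
      have h0 : n ≠ 0 := by exact_mod_cast hne0
      have h1 : n ≠ 1 := by exact_mod_cast hne1
      have : n = 2 := by omega
      exact_mod_cast this
    have hediam : G'.ediam = 2 :=
      le_antisymm hediam2 (hd2 ▸ SimpleGraph.edist_le_ediam)
    rw [SimpleGraph.diam, hediam]
    rfl
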